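/- (Direct sum decomposition in the main example.) The 𝔽-linear space F̄^I_{A′} of finitely supported families splits as an internal direct sum F̄^I_{A′} = E* ⊕ ∇*(F̄^{M I}_{A′}), where E* = {f ∈ F̄^I_{A′} : f^i_α = 0 whenever i ≠ 0} (the image of the injection ι, (ιg)^i_α = g_α if i = 0 and 0 otherwise) and ∇*(F̄^{M I}_{A′}) is the image of ∇*, (∇*χ)^i_α = Σ_μ ( D_μ χ^{μ i}_α + χ^{μ, i−e_μ}_α ) with terms having i^μ = 0 omitted. -/

import Mathlib

noncomputable section

variable {𝔽 : Type*} [Field 𝔽] {F : Type*} [CommRing F] [Algebra 𝔽 F] {m : ℕ}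
  {A A' : Type*}

/-- Membership in the space of divergences `Div F^M = {Σ_μ D_μ ψ^μ}`. -/
def IsDiv (D : Fin m → Derivation 𝔽 F F) (f : F) : Prop :=
  ∃ ψ : Fin m → F, f = ∑ μ, D μ (ψ μ)

/-- The evolutionary differentiation `ev_φ f = Σ_a φ^a · ∂_a f` (a finite sum). -/
def ev (pa : A → Derivation 𝔽 F F) (φ : A → F) (f : F) : F :=
  ∑ᶠ a, φ a * pa a f

/-- `(∇φ)^a_μ = D_μ φ^a + Σ_b Γ^a_{μb} · φ^b`; here `Γ b μ a` denotes `Γ^b_{μa}`. -/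
def nabla (D : Fin m → Derivation 𝔽 F F) (Γ : A → Fin m → A → F)
    (φ : A → F) (a : A) (μ : Fin m) : F :=
  D μ (φ a) + ∑ᶠ b, Γ a μ b * φ b

/-- `(∇*χ)_a = -Σ_μ D_μ χ^μ_a + Σ_{μ,b} Γ^b_{μa} · χ^μ_b`. -/
def nablaStar (D : Fin m → Derivation 𝔽 F F) (Γ : A → Fin m → A → F)
    (χ : Fin m → A → F) (a : A) : F :=
  -∑ μ, D μ (χ μ a) + ∑ᶠ b, ∑ μ, Γ b μ a * χ μ b

/-- The pairing `⟨f, φ⟩ = Σ_a f_a · φ^a`. -/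
def pair (f φ : A → F) : F := ∑ᶠ a, f a * φ a

/-- `D^i = D_1^{i^1} ∘ ⋯ ∘ D_m^{i^m}`. -/
def Dpow (D : Fin m → Derivation 𝔽 F F) (i : Fin m → ℕ) : F → F :=
  (List.finRange m).foldr (fun μ g => (⇑(D μ))^[i μ] ∘ g) id

/-- `|i| = i^1 + ⋯ + i^m`. -/
def msize {m : ℕ} (i : Fin m → ℕ) : ℕ := ∑ μ, i μ

/-- The differential operator `P(D)L = Σ_i P_i · D^i L`. -/
def applyP (D : Fin m → Derivation 𝔽 F F) (P : (Fin m → ℕ) → F) (L : F) : F :=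
  ∑ᶠ i, P i * Dpow D i L

/-- The Lagrange dual operator `P*(D)K = Σ_i (-1)^{|i|} D^i (P_i · K)`. -/
def applyPstar (D : Fin m → Derivation 𝔽 F F) (P : (Fin m → ℕ) → F) (K : F) : F :=
  ∑ᶠ i, (-1 : F) ^ msize i * Dpow D i (P i * K)

/-- The jet map `(jφ)^a = Σ_{i,α} j^a_{iα} · D^i φ^α`; here `jc a i α` denotes `j^a_{iα}`. -/
def jmap (D : Fin m → Derivation 𝔽 F F) (jc : A → (Fin m → ℕ) → A' → F)
    (φ : A' → F) (a : A) : F :=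
  ∑ᶠ i, ∑ᶠ α, jc a i α * Dpow D i (φ α)

/-- The Lagrange dual `(j*f)_α = Σ_{a,i} (-1)^{|i|} D^i (j^a_{iα} · f_a)`. -/
def jstar (D : Fin m → Derivation 𝔽 F F) (jc : A → (Fin m → ℕ) → A' → F)
    (f : A → F) (α : A') : F :=
  ∑ᶠ a, ∑ᶠ i, (-1 : F) ^ msize i * Dpow D i (jc a i α * f a)

/-- `(Λf)^α = Σ_{β,i} Λ^{αβ}_i · D^i f_β`; here `Λc α β i` denotes `Λ^{αβ}_i`. -/
def Lam (D : Fin m → Derivation 𝔽 F F) (Λc : A' → A' → (Fin m → ℕ) → F)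
    (f : A' → F) (α : A') : F :=
  ∑ᶠ β, ∑ᶠ i, Λc α β i * Dpow D i (f β)

/-- The Lagrange dual `(Λ*f)^α = Σ_{β,i} (-1)^{|i|} D^i (Λ^{βα}_i · f_β)`. -/
def LamStar (D : Fin m → Derivation 𝔽 F F) (Λc : A' → A' → (Fin m → ℕ) → F)
    (f : A' → F) (α : A') : F :=
  ∑ᶠ β, ∑ᶠ i, (-1 : F) ^ msize i * Dpow D i (Λc β α i * f β)

/-- The variational derivative `δR = j*(∂R)`, where `∂R = (∂_a R)`. -/
def vard (D : Fin m → Derivation 𝔽 F F) (pa : A → Derivation 𝔽 F F)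
    (jc : A → (Fin m → ℕ) → A' → F) (R : F) : A' → F :=
  jstar D jc (fun a => pa a R)

/-- The Hamiltonian vector `φ(R) = j(Λ(δR))`. -/
def hamv (D : Fin m → Derivation 𝔽 F F) (pa : A → Derivation 𝔽 F F)
    (jc : A → (Fin m → ℕ) → A' → F) (Λc : A' → A' → (Fin m → ℕ) → F) (R : F) : A → F :=
  jmap D jc (Lam D Λc (vard D pa jc R))

/-- The commutator `[ev_ψ, Λ]`, acting with coefficients `ev_ψ(Λ^{αβ}_i)`. -/
def evLam (D : Fin m → Derivation 𝔽 F F) (pa : A → Derivation 𝔽 F F)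
    (Λc : A' → A' → (Fin m → ℕ) → F) (ψ : A → F) (f : A' → F) (α : A') : F :=
  ∑ᶠ β, ∑ᶠ i, ev pa ψ (Λc α β i) * Dpow D i (f β)

/-- In the main example: `(∇*χ)^i_α = Σ_μ (D_μ χ^{μ,i}_α + χ^{μ,i-e_μ}_α)`,
the term `χ^{μ,i-e_μ}_α` being omitted when `i^μ = 0`. -/
def nablaStarEx {𝔽 : Type*} [Field 𝔽] {F : Type*} [CommRing F] [Algebra 𝔽 F] {m : ℕ}
    {A' : Type*} (D : Fin m → Derivation 𝔽 F F)
    (χ : Fin m → (Fin m → ℕ) → A' → F) (i : Fin m → ℕ) (α : A') : F :=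
  ∑ μ, (D μ (χ μ i α)
    + if i μ = 0 then 0 else χ μ (Function.update i μ (i μ - 1)) α)

section helpers18
variable {R : Type*} [CommRing R] [Algebra ℚ R]

variable (D : Fin m → Derivation ℚ R R)

lemma iter_add (μ : Fin m) (k : ℕ) (a b : R) :
    (⇑(D μ))^[k] (a + b) = (⇑(D μ))^[k] a + (⇑(D μ))^[k] b := by
  induction k generalizing a b with
  | zero => simp
  | succ k ih => simp [Function.iterate_succ_apply, map_add, ih]

lemma iter_zero (μ : Fin m) (k : ℕ) : (⇑(D μ))^[k] (0 : R) = 0 := by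
  induction k with
  | zero => simp
  | succ k ih => simp [Function.iterate_succ_apply, ih]

lemma iter_comm (hDcomm : ∀ μ ν (f : R), D μ (D ν f) = D ν (D μ f)) (μ ν : Fin m) (k : ℕ) (f : R) :
    D ν ((⇑(D μ))^[k] f) = (⇑(D μ))^[k] (D ν f) := by
  induction k generalizing f with
  | zero => simp
  | succ k ih => simp only [Function.iterate_succ_apply, ih]; rw [hDcomm]

lemma foldr_add (l : List (Fin m)) (i : Fin m → ℕ) (a b : R) :
    (l.foldr (fun μ g => (⇑(D μ))^[i μ] ∘ g) id) (a + b)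
      = (l.foldr (fun μ g => (⇑(D μ))^[i μ] ∘ g) id) a
        + (l.foldr (fun μ g => (⇑(D μ))^[i μ] ∘ g) id) b := by
  induction l generalizing a b with
  | nil => rfl
  | cons μ l ih => simp [List.foldr_cons, Function.comp, ih, iter_add]

lemma foldr_zero (l : List (Fin m)) (i : Fin m → ℕ) :
    (l.foldr (fun μ g => (⇑(D μ))^[i μ] ∘ g) id) (0 : R) = 0 := by
  induction l with
  | nil => rfl
  | cons μ l ih => simp [List.foldr_cons, Function.comp, ih, iter_zero]

lemma foldr_comm (hDcomm : ∀ μ ν (f : R), D μ (D ν f) = D ν (D μ f)) (l : List (Fin m)) (i : Fin m → ℕ) (ν : Fin m) (f : R) :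
    D ν ((l.foldr (fun μ g => (⇑(D μ))^[i μ] ∘ g) id) f)
      = (l.foldr (fun μ g => (⇑(D μ))^[i μ] ∘ g) id) (D ν f) := by
  induction l generalizing f with
  | nil => rfl
  | cons μ l ih =>
    simp only [List.foldr_cons, Function.comp_apply]
    rw [iter_comm D hDcomm, ih]

lemma foldr_congr (l : List (Fin m)) (i j : Fin m → ℕ) (h : ∀ μ ∈ l, i μ = j μ) (f : R) :
    (l.foldr (fun μ g => (⇑(D μ))^[i μ] ∘ g) id) f
      = (l.foldr (fun μ g => (⇑(D μ))^[j μ] ∘ g) id) f := by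
  induction l generalizing f with
  | nil => rfl
  | cons μ l ih =>
    simp only [List.foldr_cons, Function.comp_apply]
    rw [h μ (List.mem_cons_self), ih (fun ν hν => h ν (List.mem_cons_of_mem _ hν))]

lemma foldr_allzero (l : List (Fin m)) (i : Fin m → ℕ) (h : ∀ μ ∈ l, i μ = 0) (f : R) :
    (l.foldr (fun μ g => (⇑(D μ))^[i μ] ∘ g) id) f = f := by
  induction l generalizing f with
  | nil => rfl
  | cons μ l ih =>
    simp only [List.foldr_cons, Function.comp_apply]
    rw [ih (fun ν hν => h ν (List.mem_cons_of_mem _ hν)), h μ (List.mem_cons_self)]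
    rfl

lemma foldr_update (hDcomm : ∀ μ ν (f : R), D μ (D ν f) = D ν (D μ f)) (l : List (Fin m)) (hnd : l.Nodup) (μ : Fin m) (hμ : μ ∈ l)
    (i : Fin m → ℕ) (f : R) :
    (l.foldr (fun ν g => (⇑(D ν))^[Function.update i μ (i μ + 1) ν] ∘ g) id) f
      = D μ ((l.foldr (fun ν g => (⇑(D ν))^[i ν] ∘ g) id) f) := by
  induction l generalizing f with
  | nil => simp at hμ
  | cons a l ih =>
    simp only [List.foldr_cons, Function.comp_apply]
    rcases List.nodup_cons.mp hnd with ⟨ha, hnd'⟩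
    by_cases ham : a = μ
    · subst ham
      rw [Function.update_self]
      rw [foldr_congr D (i := Function.update i a (i a + 1)) (j := i)
        (h := fun ν hν => Function.update_of_ne (fun h => ha (by rw [← h]; exact hν)) _ _)]
      rw [Function.iterate_succ_apply']
    · have hμl : μ ∈ l := by
        rcases List.mem_cons.mp hμ with h | h
        · exact absurd h.symm ham
        · exact h
      rw [Function.update_of_ne ham, ih hnd' hμl]
      exact (iter_comm D hDcomm a μ (i a) _).symm

lemma Dpow_add (i : Fin m → ℕ) (a b : R) : Dpow D i (a + b) = Dpow D i a + Dpow D i b :=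
  foldr_add D _ i a b

lemma Dpow_zero_arg (i : Fin m → ℕ) : Dpow D i (0 : R) = 0 := foldr_zero D _ i

lemma Dpow_zero_idx (f : R) : Dpow D (0 : Fin m → ℕ) f = f :=
  foldr_allzero D _ _ (fun _ _ => rfl) f

lemma Dpow_comm (hDcomm : ∀ μ ν (f : R), D μ (D ν f) = D ν (D μ f)) (i : Fin m → ℕ) (ν : Fin m) (f : R) :
    D ν (Dpow D i f) = Dpow D i (D ν f) := foldr_comm D hDcomm _ i ν f

lemma Dpow_update (hDcomm : ∀ μ ν (f : R), D μ (D ν f) = D ν (D μ f)) (i : Fin m → ℕ) (μ : Fin m) (f : R) :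
    Dpow D (Function.update i μ (i μ + 1)) f = D μ (Dpow D i f) :=
  foldr_update D hDcomm _ (List.nodup_finRange m) μ (List.mem_finRange μ) i f

lemma msize_update (i : Fin m → ℕ) (μ : Fin m) :
    msize (Function.update i μ (i μ + 1)) = msize i + 1 := by
  unfold msize
  rw [Finset.sum_update_of_mem (Finset.mem_univ μ)]
  rw [← Finset.sum_erase_add _ _ (Finset.mem_univ μ), Finset.erase_eq]
  ring

lemma msize_eq_zero {i : Fin m → ℕ} (h : msize i = 0) : i = 0 := by
  funext μ
  have := Finset.sum_eq_zero_iff.mp h μ (Finset.mem_univ μ)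
  simpa using this




lemma Dpow_sum {ι : Type*} (D : Fin m → Derivation ℚ R R) (s : Finset ι) (i : Fin m → ℕ)
    (f : ι → R) : Dpow D i (∑ x ∈ s, f x) = ∑ x ∈ s, Dpow D i (f x) :=
  map_sum (AddMonoidHom.mk' (Dpow D i) (Dpow_add D i)) f s

lemma msize_zero : msize (0 : Fin m → ℕ) = 0 := by simp [msize]

lemma part2 (D : Fin m → Derivation ℚ R R)
    (hDcomm : ∀ μ ν (f : R), D μ (D ν f) = D ν (D μ f))
    (g : A' → R) (χ : Fin m → (Fin m → ℕ) → A' → R)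
    (hχ : {p : Fin m × (Fin m → ℕ) × A' | χ p.1 p.2.1 p.2.2 ≠ 0}.Finite)
    (h : ∀ (i : Fin m → ℕ) (α : A'),
      (if i = 0 then g α else 0) = nablaStarEx D χ i α)
    (α : A') : g α = 0 := by
  classical
  set T := hχ.toFinset with hT
  set S : Finset (Fin m → ℕ) :=
    insert 0 (T.image (fun p => p.2.1)
      ∪ T.image (fun p => Function.update p.2.1 p.1 (p.2.1 p.1 + 1))) with hS
  have hS0 : (0 : Fin m → ℕ) ∈ S := Finset.mem_insert_self _ _
  have hmem : ∀ (μ : Fin m) (j : Fin m → ℕ), χ μ j α ≠ 0 → (μ, j, α) ∈ T := by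
    intro μ j hne
    rw [hT, Set.Finite.mem_toFinset]
    exact hne
  have hS1 : ∀ (μ : Fin m) (j : Fin m → ℕ), χ μ j α ≠ 0 → j ∈ S := by
    intro μ j hne
    exact Finset.mem_insert_of_mem (Finset.mem_union_left _
      (Finset.mem_image.mpr ⟨(μ, j, α), hmem μ j hne, rfl⟩))
  have hS2 : ∀ (μ : Fin m) (j : Fin m → ℕ), χ μ j α ≠ 0 →
      Function.update j μ (j μ + 1) ∈ S := by
    intro μ j hne
    exact Finset.mem_insert_of_mem (Finset.mem_union_right _
      (Finset.mem_image.mpr ⟨(μ, j, α), hmem μ j hne, rfl⟩))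
  -- key computation
  have step1 : g α = ∑ i ∈ S, (-1 : R) ^ msize i * Dpow D i (if i = 0 then g α else 0) := by
    rw [Finset.sum_eq_single_of_mem 0 hS0]
    · rw [if_pos rfl, msize_zero, pow_zero, one_mul, Dpow_zero_idx]
    · intro i _ hne
      rw [if_neg hne, Dpow_zero_arg, mul_zero]
  have step2 : g α = ∑ μ : Fin m, ∑ i ∈ S,
      ((-1 : R) ^ msize i * Dpow D i (D μ (χ μ i α))
        + (-1 : R) ^ msize i * Dpow D i
          (if i μ = 0 then 0 else χ μ (Function.update i μ (i μ - 1)) α)) := by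
    rw [step1]
    rw [Finset.sum_comm]
    refine Finset.sum_congr rfl fun i _ => ?_
    rw [h i α]
    unfold nablaStarEx
    rw [Dpow_sum, Finset.mul_sum]
    refine Finset.sum_congr rfl fun μ _ => ?_
    rw [Dpow_add, mul_add]
  have key : ∀ μ : Fin m, ∑ i ∈ S,
      ((-1 : R) ^ msize i * Dpow D i (D μ (χ μ i α))
        + (-1 : R) ^ msize i * Dpow D i
          (if i μ = 0 then 0 else χ μ (Function.update i μ (i μ - 1)) α)) = 0 := by
    intro μ
    rw [Finset.sum_add_distrib]
    have hA : ∑ i ∈ S, (-1 : R) ^ msize i * Dpow D i (D μ (χ μ i α))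
        = ∑ i ∈ S.filter (fun j => χ μ j α ≠ 0),
            (-1 : R) ^ msize i * Dpow D i (D μ (χ μ i α)) := by
      refine (Finset.sum_filter_of_ne fun i _ hne => ?_).symm
      by_contra h0
      rw [h0, map_zero, Dpow_zero_arg, mul_zero] at hne
      exact hne rfl
    have hB : ∑ i ∈ S, (-1 : R) ^ msize i * Dpow D i
          (if i μ = 0 then 0 else χ μ (Function.update i μ (i μ - 1)) α)
        = ∑ i ∈ S.filter (fun i => i μ ≠ 0 ∧ χ μ (Function.update i μ (i μ - 1)) α ≠ 0),
            (-1 : R) ^ msize i * Dpow D i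
              (if i μ = 0 then 0 else χ μ (Function.update i μ (i μ - 1)) α) := by
      refine (Finset.sum_filter_of_ne fun i _ hne => ?_).symm
      constructor
      · intro h0
        rw [if_pos h0, Dpow_zero_arg, mul_zero] at hne
        exact hne rfl
      · intro h0
        rw [h0, ite_self, Dpow_zero_arg, mul_zero] at hne
        exact hne rfl
    rw [hA, hB]
    have hbij : ∑ i ∈ S.filter (fun j => χ μ j α ≠ 0),
        (-1 : R) ^ msize i * Dpow D i (D μ (χ μ i α))
      = ∑ i ∈ S.filter (fun i => i μ ≠ 0 ∧ χ μ (Function.update i μ (i μ - 1)) α ≠ 0),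
          -((-1 : R) ^ msize i * Dpow D i
            (if i μ = 0 then 0 else χ μ (Function.update i μ (i μ - 1)) α)) := by
      refine Finset.sum_nbij' (fun j => Function.update j μ (j μ + 1))
        (fun i => Function.update i μ (i μ - 1)) ?_ ?_ ?_ ?_ ?_
      · intro j hj
        rw [Finset.mem_filter] at hj ⊢
        obtain ⟨hjS, hjne⟩ := hj
        refine ⟨hS2 μ j hjne, ?_, ?_⟩
        · simp [Function.update_self]
        · have : Function.update (Function.update j μ (j μ + 1)) μ
              (Function.update j μ (j μ + 1) μ - 1) = j := by
            funext ν
            by_cases hν : ν = μ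
            · subst hν; simp
            · simp [Function.update_of_ne hν]
          rw [this]
          exact hjne
      · intro i hi
        rw [Finset.mem_filter] at hi ⊢
        exact ⟨hS1 μ _ hi.2.2, hi.2.2⟩
      · intro j hj
        funext ν
        by_cases hν : ν = μ
        · subst hν; simp
        · simp [Function.update_of_ne hν]
      · intro i hi
        rw [Finset.mem_filter] at hi
        funext ν
        by_cases hν : ν = μ
        · subst hν
          simp only [Function.update_self]
          omega
        · simp [Function.update_of_ne hν]
      · intro j hj
        rw [Finset.mem_filter] at hj
        have h1 : Function.update j μ (j μ + 1) μ = j μ + 1 := Function.update_self _ _ _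
        have h2 : Function.update (Function.update j μ (j μ + 1)) μ
            (j μ + 1 - 1) = j := by
          funext ν
          by_cases hν : ν = μ
          · subst hν; simp
          · simp [Function.update_of_ne hν]
        beta_reduce
        rw [msize_update, h1, if_neg (Nat.succ_ne_zero _), h2,
          Dpow_update D hDcomm, pow_succ, ← Dpow_comm D hDcomm]
        ring
    rw [hbij, Finset.sum_neg_distrib]
    ring
  rw [step2, Finset.sum_congr rfl fun μ _ => key μ, Finset.sum_const, smul_zero]

lemma nablaStarEx_add (D : Fin m → Derivation ℚ R R)
    (a b : Fin m → (Fin m → ℕ) → A' → R) (i : Fin m → ℕ) (α : A') :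
    nablaStarEx D (fun μ j β => a μ j β + b μ j β) i α
      = nablaStarEx D a i α + nablaStarEx D b i α := by
  unfold nablaStarEx
  rw [← Finset.sum_add_distrib]
  refine Finset.sum_congr rfl fun μ _ => ?_
  simp only [map_add]
  by_cases h : i μ = 0 <;> simp [h] <;> ring

open Classical in
lemma nablaStarEx_single (D : Fin m → Derivation ℚ R R) (μ₀ : Fin m) (j₀ : Fin m → ℕ)
    (α₀ : A') (c : R) (i : Fin m → ℕ) (α : A') :
    nablaStarEx D (fun μ j β => if μ = μ₀ ∧ j = j₀ ∧ β = α₀ then c else 0) i α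
      = (if i = j₀ ∧ α = α₀ then D μ₀ c else 0)
        + (if i = Function.update j₀ μ₀ (j₀ μ₀ + 1) ∧ α = α₀ then c else 0) := by
  unfold nablaStarEx
  beta_reduce
  rw [Finset.sum_eq_single_of_mem μ₀ (Finset.mem_univ μ₀)]
  · congr 1
    · by_cases hi : i = j₀ ∧ α = α₀
      · obtain ⟨h1, h2⟩ := hi; subst h1; subst h2; simp
      · rw [if_neg (show ¬(μ₀ = μ₀ ∧ i = j₀ ∧ α = α₀) from fun h => hi ⟨h.2.1, h.2.2⟩),
          map_zero, if_neg hi]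
    · by_cases hi : i = Function.update j₀ μ₀ (j₀ μ₀ + 1) ∧ α = α₀
      · obtain ⟨h1, h2⟩ := hi
        have hne0 : ¬(i μ₀ = 0) := by rw [h1]; simp
        rw [if_neg hne0]
        have hupd : Function.update i μ₀ (i μ₀ - 1) = j₀ := by
          rw [h1]
          funext ν
          by_cases hν : ν = μ₀
          · subst hν; simp
          · simp [Function.update_of_ne hν]
        rw [if_pos (show μ₀ = μ₀ ∧ Function.update i μ₀ (i μ₀ - 1) = j₀ ∧ α = α₀ from
            ⟨rfl, hupd, h2⟩),
          if_pos (show i = Function.update j₀ μ₀ (j₀ μ₀ + 1) ∧ α = α₀ from ⟨h1, h2⟩)]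
      · rw [if_neg hi]
        by_cases h0 : i μ₀ = 0
        · rw [if_pos h0]
        · rw [if_neg h0, if_neg]
          rintro ⟨-, h2, h3⟩
          apply hi
          refine ⟨?_, h3⟩
          funext ν
          by_cases hν : ν = μ₀
          · subst hν
            have ha := congrFun h2 ν
            rw [Function.update_self] at ha
            rw [Function.update_self]
            omega
          · have ha := congrFun h2 ν
            rw [Function.update_of_ne hν] at ha
            rw [Function.update_of_ne hν]
            exact ha
  · intro μ _ hμ
    rw [if_neg (show ¬(μ = μ₀ ∧ i = j₀ ∧ α = α₀) from fun h => hμ h.1), map_zero, zero_add]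
    by_cases h0 : i μ = 0
    · rw [if_pos h0]
    · rw [if_neg h0,
        if_neg (show ¬(μ = μ₀ ∧ Function.update i μ (i μ - 1) = j₀ ∧ α = α₀) from
          fun h => hμ h.1)]

lemma part1_aux (D : Fin m → Derivation ℚ R R) :
    ∀ n : ℕ, ∀ f : (Fin m → ℕ) → A' → R,
    ∀ hf : {p : (Fin m → ℕ) × A' | f p.1 p.2 ≠ 0}.Finite,
    (∑ p ∈ hf.toFinset, msize p.1) ≤ n →
      ∃ g : A' → R, {α : A' | g α ≠ 0}.Finite ∧
      ∃ χ : Fin m → (Fin m → ℕ) → A' → R,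
        {p : Fin m × (Fin m → ℕ) × A' | χ p.1 p.2.1 p.2.2 ≠ 0}.Finite ∧
        ∀ (i : Fin m → ℕ) (α : A'),
          f i α = (if i = 0 then g α else 0) + nablaStarEx D χ i α := by
  classical
  intro n
  induction n with
  | zero =>
    intro f hf hsum
    -- all nonzero components are at i = 0
    have hall : ∀ (i : Fin m → ℕ) (α : A'), i ≠ 0 → f i α = 0 := by
      intro i α hi
      by_contra h0
      have hmem : (i, α) ∈ hf.toFinset := by
        rw [Set.Finite.mem_toFinset]; exact h0
      have h1 : msize i ≤ ∑ p ∈ hf.toFinset, msize p.1 :=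
        Finset.single_le_sum (f := fun p : (Fin m → ℕ) × A' => msize p.1)
          (fun p _ => Nat.zero_le _) hmem
      have h2 : msize i = 0 := Nat.le_zero.mp (h1.trans hsum)
      exact hi (msize_eq_zero h2)
    refine ⟨fun α => f 0 α, ?_, 0, ?_, ?_⟩
    · refine Set.Finite.subset (hf.image Prod.snd) ?_
      intro α hα
      exact ⟨(0, α), hα, rfl⟩
    · convert Set.finite_empty
      ext p
      simp
    · intro i α
      have : nablaStarEx D 0 i α = 0 := by
        unfold nablaStarEx
        refine Finset.sum_eq_zero fun μ _ => ?_
        simp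
      rw [this, add_zero]
      by_cases hi : i = 0
      · subst hi; rw [if_pos rfl]
      · rw [if_neg hi, hall i α hi]
  | succ n ih =>
    intro f hf hsum
    by_cases hall : ∀ (i : Fin m → ℕ) (α : A'), i ≠ 0 → f i α = 0
    · -- same base case
      refine ⟨fun α => f 0 α, ?_, 0, ?_, ?_⟩
      · refine Set.Finite.subset (hf.image Prod.snd) ?_
        intro α hα
        exact ⟨(0, α), hα, rfl⟩
      · convert Set.finite_empty
        ext p
        simp
      · intro i α
        have : nablaStarEx D 0 i α = 0 := by
          unfold nablaStarEx
          refine Finset.sum_eq_zero fun μ _ => ?_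
          simp
        rw [this, add_zero]
        by_cases hi : i = 0
        · subst hi; rw [if_pos rfl]
        · rw [if_neg hi, hall i α hi]
    · push_neg at hall
      obtain ⟨i₀, α₀, hi₀, hc⟩ := hall
      obtain ⟨μ₀, hμ₀⟩ := Function.ne_iff.mp hi₀
      have hμ₀' : i₀ μ₀ ≠ 0 := by simpa using hμ₀
      clear hμ₀
      set c := f i₀ α₀ with hcdef
      set j₀ := Function.update i₀ μ₀ (i₀ μ₀ - 1) with hj₀
      have hkey : Function.update j₀ μ₀ (j₀ μ₀ + 1) = i₀ := by
        funext ν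
        by_cases hν : ν = μ₀
        · subst hν; simp [hj₀]; omega
        · simp [hj₀, Function.update_of_ne hν]
      have hj₀ne : j₀ ≠ i₀ := by
        intro hh
        have h1 : j₀ μ₀ = i₀ μ₀ := congrFun hh μ₀
        rw [hj₀, Function.update_self] at h1
        omega
      set χ₀ : Fin m → (Fin m → ℕ) → A' → R :=
        fun μ j β => if μ = μ₀ ∧ j = j₀ ∧ β = α₀ then c else 0 with hχ₀
      have hns : ∀ (i : Fin m → ℕ) (α : A'), nablaStarEx D χ₀ i α
          = (if i = j₀ ∧ α = α₀ then D μ₀ c else 0)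
            + (if i = i₀ ∧ α = α₀ then c else 0) := by
        intro i α
        rw [hχ₀, nablaStarEx_single D μ₀ j₀ α₀ c i α, hkey]
      set f' : (Fin m → ℕ) → A' → R := fun i α => f i α - nablaStarEx D χ₀ i α with hf'def
      have hf'supp : {p : (Fin m → ℕ) × A' | f' p.1 p.2 ≠ 0}
          ⊆ {p | f p.1 p.2 ≠ 0} ∪ {(j₀, α₀), (i₀, α₀)} := by
        intro p hp
        by_cases hfp : f p.1 p.2 ≠ 0
        · exact Or.inl hfp
        · right
          rw [not_not] at hfp
          have hp' : nablaStarEx D χ₀ p.1 p.2 ≠ 0 := by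
            intro h0
            apply hp
            rw [hf'def]
            simp only [Set.mem_setOf_eq] at *
            rw [hfp, h0, sub_zero]
          rw [hns] at hp'
          by_cases h1 : p.1 = j₀ ∧ p.2 = α₀
          · exact Set.mem_insert_iff.mpr (Or.inl (Prod.ext h1.1 h1.2))
          · right
            rw [if_neg h1, zero_add] at hp'
            by_cases h2 : p.1 = i₀ ∧ p.2 = α₀
            · exact Set.mem_singleton_iff.mpr (Prod.ext h2.1 h2.2)
            · rw [if_neg h2] at hp'; exact absurd rfl hp'
      have hf' : {p : (Fin m → ℕ) × A' | f' p.1 p.2 ≠ 0}.Finite :=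
        Set.Finite.subset (hf.union ((Set.finite_singleton ((i₀, α₀) : (Fin m → ℕ) × A')).insert (j₀, α₀))) hf'supp
      -- f' vanishes at (i₀, α₀)
      have hf'i₀ : f' i₀ α₀ = 0 := by
        rw [hf'def]
        simp only
        rw [hns, if_neg (show ¬(i₀ = j₀ ∧ α₀ = α₀) from fun h => hj₀ne h.1.symm),
          if_pos ⟨rfl, rfl⟩, ← hcdef]
        ring
      -- support inclusion as finsets
      have hsub : hf'.toFinset ⊆ insert (j₀, α₀) (hf.toFinset.erase (i₀, α₀)) := by
        intro p hp
        rw [Set.Finite.mem_toFinset] at hp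
        rcases hf'supp hp with h | h
        · refine Finset.mem_insert_of_mem (Finset.mem_erase.mpr ⟨?_, ?_⟩)
          · intro hpe
            apply hp
            rw [hpe]
            exact hf'i₀
          · rw [Set.Finite.mem_toFinset]; exact h
        · rcases h with h | h
          · rw [h]; exact Finset.mem_insert_self _ _
          · rw [Set.mem_singleton_iff] at h
            exfalso
            apply hp
            rw [h]
            exact hf'i₀
      have hbound : (∑ p ∈ hf'.toFinset, msize p.1) ≤ n := by
        have h1 : (∑ p ∈ hf'.toFinset, msize p.1)
            ≤ ∑ p ∈ insert (j₀, α₀) (hf.toFinset.erase (i₀, α₀)), msize p.1 :=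
          Finset.sum_le_sum_of_subset hsub
        have h2 : (∑ p ∈ insert (j₀, α₀) (hf.toFinset.erase (i₀, α₀)), msize p.1)
            ≤ msize j₀ + ∑ p ∈ hf.toFinset.erase (i₀, α₀), msize p.1 := by
          by_cases hmem : (j₀, α₀) ∈ hf.toFinset.erase (i₀, α₀)
          · rw [Finset.insert_eq_self.mpr hmem]
            omega
          · rw [Finset.sum_insert hmem]
        have hi₀mem : (i₀, α₀) ∈ hf.toFinset := by
          rw [Set.Finite.mem_toFinset]; exact hc
        have h3 : msize i₀ + (∑ p ∈ hf.toFinset.erase (i₀, α₀), msize p.1)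
            = ∑ p ∈ hf.toFinset, msize p.1 :=
          Finset.add_sum_erase _ (fun p => msize p.1) hi₀mem
        have h4 : msize j₀ + 1 = msize i₀ := by
          rw [← hkey, msize_update]
        omega
      obtain ⟨g, hg, χ', hχ', heq'⟩ := ih f' hf' hbound
      refine ⟨g, hg, fun μ j β => χ₀ μ j β + χ' μ j β, ?_, ?_⟩
      · refine Set.Finite.subset ((Set.finite_singleton (μ₀, j₀, α₀)).union hχ') ?_
        intro p hp
        simp only [Set.mem_setOf_eq] at hp
        by_cases h1 : χ' p.1 p.2.1 p.2.2 ≠ 0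
        · exact Or.inr h1
        · left
          rw [not_not] at h1
          rw [h1, add_zero, hχ₀] at hp
          simp only at hp
          by_cases h2 : p.1 = μ₀ ∧ p.2.1 = j₀ ∧ p.2.2 = α₀
          · rw [Set.mem_singleton_iff]
            obtain ⟨a, b, c⟩ := h2
            exact Prod.ext a (Prod.ext b c)
          · rw [if_neg h2] at hp; exact absurd rfl hp
      · intro i α
        have := heq' i α
        rw [hf'def] at this
        simp only at this
        have heq2 : f i α = (if i = 0 then g α else 0) + nablaStarEx D χ' i α
            + nablaStarEx D χ₀ i α := by
          rw [← this]; ring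
        rw [heq2, nablaStarEx_add]
        ring

lemma part1 (D : Fin m → Derivation ℚ R R)
    (f : (Fin m → ℕ) → A' → R) (hf : {p : (Fin m → ℕ) × A' | f p.1 p.2 ≠ 0}.Finite) :
      ∃ g : A' → R, {α : A' | g α ≠ 0}.Finite ∧
      ∃ χ : Fin m → (Fin m → ℕ) → A' → R,
        {p : Fin m × (Fin m → ℕ) × A' | χ p.1 p.2.1 p.2.2 ≠ 0}.Finite ∧
        ∀ (i : Fin m → ℕ) (α : A'),
          f i α = (if i = 0 then g α else 0) + nablaStarEx D χ i α :=
  part1_aux D _ f hf le_rfl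

end helpers18

/-- direct sum decomposition in the main example:
every finitely supported family `f = (f^i_α)` decomposes as `f = ι g + ∇*χ`
with `g` and `χ` finitely supported, and the subspace `E* = im ι` meets
`im ∇*` trivially. -/
theorem stmt_18
    {F : Type*} [CommRing F] [Algebra ℚ F] {m : ℕ} {A' : Type*}
    (D : Fin m → Derivation ℚ F F)
    (hDcomm : ∀ μ ν (f : F), D μ (D ν f) = D ν (D μ f)) :
    (∀ f : (Fin m → ℕ) → A' → F, {p : (Fin m → ℕ) × A' | f p.1 p.2 ≠ 0}.Finite →
      ∃ g : A' → F, {α : A' | g α ≠ 0}.Finite ∧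
      ∃ χ : Fin m → (Fin m → ℕ) → A' → F,
        {p : Fin m × (Fin m → ℕ) × A' | χ p.1 p.2.1 p.2.2 ≠ 0}.Finite ∧
        ∀ (i : Fin m → ℕ) (α : A'),
          f i α = (if i = 0 then g α else 0) + nablaStarEx D χ i α)
    ∧ (∀ (g : A' → F) (χ : Fin m → (Fin m → ℕ) → A' → F),
        {p : Fin m × (Fin m → ℕ) × A' | χ p.1 p.2.1 p.2.2 ≠ 0}.Finite →
        (∀ (i : Fin m → ℕ) (α : A'),
          (if i = 0 then g α else 0) = nablaStarEx D χ i α) →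
        ∀ α : A', g α = 0) :=
  ⟨fun f hf => part1 D f hf, fun g χ hχ h => part2 D hDcomm g χ hχ h⟩
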